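/- In the generalized map Witt algebra M, if D is a degree-0 derivation from M to M⊗M vanishing on the subalgebra W = span{L_α · 1 : α ∈ Γ}, and if D(L_0 z) = (L_0 ⊗ L_0) f_z with D(L_α z) = (L_α ⊗ L_0) f_z + (L_0 ⊗ L_α) f_z for all α ≠ 0, then applying D to the relation [L_{−α}·1, L_α x] = 2α L_0 x forces f_x = 0 for all x ∈ A, hence D = 0. -/

import Mathlib

open Finsupp TensorProduct

/-- Bracket of the generalized map Witt algebra `[L_α x, L_β y] = (β−α)L_{α+β}(xy)`,
as a bilinear map on `M = W(Γ) ⊗ A = Γ →₀ A`. -/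
noncomputable def bkM {F : Type*} [Field F] (Γ : AddSubgroup F)
    (A : Type*) [CommRing A] [Algebra F A] :
    (Γ →₀ A) →ₗ[F] (Γ →₀ A) →ₗ[F] (Γ →₀ A) :=
  Finsupp.lsum F fun α =>
    (Finsupp.lsum (R := F) (S := F) (M := A) (N := (Γ →₀ A))).toLinearMap.comp
      (LinearMap.pi fun β : Γ =>
        ((β : F) - (α : F)) •
          ((LinearMap.llcomp F A A (Γ →₀ A) (Finsupp.lsingle (α + β))).comp
            (LinearMap.mul F A)))

/-- Diagonal adjoint action of `M` on `V = M ⊗ M`. -/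
noncomputable def actM {F : Type*} [Field F] (Γ : AddSubgroup F)
    (A : Type*) [CommRing A] [Algebra F A] (x : Γ →₀ A) :
    ((Γ →₀ A) ⊗[F] (Γ →₀ A)) →ₗ[F] ((Γ →₀ A) ⊗[F] (Γ →₀ A)) :=
  LinearMap.rTensor _ (bkM Γ A x) + LinearMap.lTensor _ (bkM Γ A x)

noncomputable instance instZeroTensorM2 {F : Type*} [Field F] (Γ : AddSubgroup F)
    (A : Type*) [CommRing A] [Algebra F A] :
    Zero ((Γ →₀ A) ⊗[F] (Γ →₀ A)) :=
  ⟨(inferInstance : AddCommMonoid ((Γ →₀ A) ⊗[F] (Γ →₀ A))).zero⟩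

/-- The embedding `A ⊗ A → M ⊗ M`, `f ↦ (L_α ⊗ L_β) f`. -/
noncomputable def embM {F : Type*} [Field F] (Γ : AddSubgroup F)
    (A : Type*) [CommRing A] [Algebra F A] (α β : Γ) :
    (A ⊗[F] A) →ₗ[F] ((Γ →₀ A) ⊗[F] (Γ →₀ A)) :=
  TensorProduct.map (Finsupp.lsingle α) (Finsupp.lsingle β)

lemma bkM_single {F : Type*} [Field F] (Γ : AddSubgroup F)
    (A : Type*) [CommRing A] [Algebra F A] (α β : Γ) (x y : A) :
    bkM Γ A (Finsupp.single α x) (Finsupp.single β y)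
      = ((β : F) - (α : F)) • Finsupp.single (α + β) (x * y) := by
  simp [bkM]

lemma actM_single_one_emb {F : Type*} [Field F] (Γ : AddSubgroup F)
    (A : Type*) [CommRing A] [Algebra F A] (γ α β : Γ) (t : A ⊗[F] A) :
    actM Γ A (Finsupp.single γ (1 : A)) (embM Γ A α β t)
      = ((α : F) - (γ : F)) • embM Γ A (γ + α) β t
        + ((β : F) - (γ : F)) • embM Γ A α (γ + β) t := by
  induction t using TensorProduct.induction_on with
  | zero => simp
  | tmul a b =>
      simp only [actM, LinearMap.add_apply, LinearMap.rTensor_tmul,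
        LinearMap.lTensor_tmul, embM, TensorProduct.map_tmul,
        Finsupp.lsingle_apply, bkM_single, one_mul,
        ← TensorProduct.smul_tmul', TensorProduct.tmul_smul]
  | add s t hs ht =>
      simp only [map_add, hs, ht, smul_add]
      abel

lemma proj00_emb00 {F : Type*} [Field F] (Γ : AddSubgroup F)
    (A : Type*) [CommRing A] [Algebra F A] (t : A ⊗[F] A) :
    TensorProduct.map (Finsupp.lapply (0 : Γ)) (Finsupp.lapply (0 : Γ))
        (embM Γ A 0 0 t) = t := by
  induction t using TensorProduct.induction_on with
  | zero => simp
  | tmul a b => simp [embM]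
  | add s t hs ht => simp [hs, ht]

lemma proj00_emb_ne {F : Type*} [Field F] (Γ : AddSubgroup F)
    (A : Type*) [CommRing A] [Algebra F A] (α β : Γ) (h : α ≠ 0 ∨ β ≠ 0)
    (t : A ⊗[F] A) :
    TensorProduct.map (Finsupp.lapply (0 : Γ)) (Finsupp.lapply (0 : Γ))
        (embM Γ A α β t) = 0 := by
  induction t using TensorProduct.induction_on with
  | zero => simp
  | tmul a b =>
      rcases h with h | h
      · simp only [embM, TensorProduct.map_tmul, Finsupp.lsingle_apply,
          Finsupp.lapply_apply, Finsupp.single_eq_of_ne' h,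
          TensorProduct.zero_tmul]
      · simp only [embM, TensorProduct.map_tmul, Finsupp.lsingle_apply,
          Finsupp.lapply_apply, Finsupp.single_eq_of_ne' h,
          TensorProduct.tmul_zero]
  | add s t hs ht => simp [hs, ht]


/-- a degree-zero derivation `D : M → M ⊗ M` vanishing on
`W = span{L_α · 1}` whose values are `D(L_0 z) = (L_0⊗L_0) f_z` and
`D(L_α z) = (L_α⊗L_0) f_z + (L_0⊗L_α) f_z` for `α ≠ 0` satisfies `f_x = 0` for
all `x ∈ A` (via the relation `[L_{−α}·1, L_α x] = 2α L_0 x`), hence `D = 0`. -/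
theorem map_witt_degree_zero_derivation_vanishes
    {F : Type*} [Field F] [CharZero F] (Γ : AddSubgroup F) (h1 : (1 : F) ∈ Γ)
    (hne : ∃ α : Γ, α ≠ 0)
    (A : Type*) [CommRing A] [Algebra F A] [IsDomain (A ⊗[F] A)]
    (D : (Γ →₀ A) →ₗ[F] ((Γ →₀ A) ⊗[F] (Γ →₀ A)))
    (hD : ∀ u v, D (bkM Γ A u v) = actM Γ A u (D v) - actM Γ A v (D u))
    (hW : ∀ α : Γ, D (Finsupp.single α (1 : A)) = 0)
    (f : A → A ⊗[F] A)
    (hf0 : ∀ z : A, D (Finsupp.single (0 : Γ) z) = embM Γ A 0 0 (f z))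
    (hfa : ∀ α : Γ, α ≠ 0 → ∀ z : A,
      D (Finsupp.single α z) = embM Γ A α 0 (f z) + embM Γ A 0 α (f z)) :
    (∀ x : A, f x = 0) ∧ D = 0 := by
  set e : Γ := ⟨(1 : F), h1⟩ with he
  have heF : ((e : F)) = 1 := rfl
  have he0 : e ≠ 0 := by
    intro h
    exact one_ne_zero (congrArg Subtype.val h)
  have hfx : ∀ x : A, f x = 0 := by
    intro x
    have key := hD (Finsupp.single (-e) (1 : A)) (Finsupp.single e x)
    rw [hW, bkM_single] at key
    simp only [map_zero, neg_add_cancel, add_zero, zero_add, one_mul,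
      map_smul, sub_zero] at key
    rw [hf0, hfa e he0] at key
    rw [map_add, actM_single_one_emb, actM_single_one_emb] at key
    simp only [neg_add_cancel, add_zero, zero_add] at key
    have key2 := congrArg
      (TensorProduct.map (Finsupp.lapply (0 : Γ)) (Finsupp.lapply (0 : Γ))) key
    simp only [map_sub, sub_zero, map_zero, map_add, map_smul, proj00_emb00,
      proj00_emb_ne Γ A e (-e) (Or.inl he0),
      proj00_emb_ne Γ A (-e) e (Or.inl (neg_ne_zero.mpr he0)),
      smul_zero, add_zero, zero_add, heF, ZeroMemClass.coe_zero,
      AddSubgroup.coe_neg, neg_neg, sub_neg_eq_add, zero_add] at key2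
    -- key2 : (1+1) • f x = (1+1) • f x + 1 • f x + (1 • f x + (1+1) • f x)
    have h4 : ((2 : F)) • f x = 0 := by
      linear_combination (norm := module) - key2
    rcases smul_eq_zero.mp h4 with h | h
    · exact absurd h (by norm_num)
    · exact h
  refine ⟨hfx, ?_⟩
  apply Finsupp.lhom_ext
  intro α z
  by_cases hα : α = 0
  · subst hα; simp [hf0 z, hfx z]
  · simp [hfa α hα z, hfx z]
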